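/- The map Ŝ(x₁,x₂,y₁,y₂,z₁,z₂,t₁,t₂) = (x₁x₂y₁/(x₁x₂+y₂z₁), y₂, (x₁x₂+y₂z₁)/x₂, x₂z₂, y₁y₂z₁/(x₁x₂+y₂z₁), 1, t₁x₂/y₂, t₂z₂) satisfies the set-theoretical 4-simplex equation, wherever all denominators are nonzero. -/

import Mathlib

set_option maxHeartbeats 4000000


/-- The noninvolutive Hirota-type 4-simplex map `Ŝ`. -/
noncomputable def hirotaShat :
    (ℂ × ℂ) × (ℂ × ℂ) × (ℂ × ℂ) × (ℂ × ℂ) → (ℂ × ℂ) × (ℂ × ℂ) × (ℂ × ℂ) × (ℂ × ℂ) :=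
  fun ((x1, x2), (y1, y2), (z1, z2), (t1, t2)) =>
    ((x1 * x2 * y1 / (x1 * x2 + y2 * z1), y2),
     ((x1 * x2 + y2 * z1) / x2, x2 * z2),
     (y1 * y2 * z1 / (x1 * x2 + y2 * z1), 1),
     (t1 * x2 / y2, t2 * z2))

/-- All denominators occurring in `Ŝ` are nonzero. -/
def hirotaShatOk : (ℂ × ℂ) × (ℂ × ℂ) × (ℂ × ℂ) × (ℂ × ℂ) → Prop :=
  fun ((x1, x2), (y1, y2), (z1, z2), (t1, t2)) =>
    x1 * x2 + y2 * z1 ≠ 0 ∧ x2 ≠ 0 ∧ y2 ≠ 0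

section Lifts
variable {X : Type*} (S : X × X × X × X → X × X × X × X)

/-- `S` acting on factors 1,2,3,4 of a 10-tuple. -/
def lift1234 : X × X × X × X × X × X × X × X × X × X → X × X × X × X × X × X × X × X × X × X :=
  fun (p1, p2, p3, p4, p5, p6, p7, p8, p9, p10) =>
    let q := S (p1, p2, p3, p4)
    (q.1, q.2.1, q.2.2.1, q.2.2.2, p5, p6, p7, p8, p9, p10)

/-- `S` acting on factors 1,5,6,7 of a 10-tuple. -/
def lift1567 : X × X × X × X × X × X × X × X × X × X → X × X × X × X × X × X × X × X × X × X :=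
  fun (p1, p2, p3, p4, p5, p6, p7, p8, p9, p10) =>
    let q := S (p1, p5, p6, p7)
    (q.1, p2, p3, p4, q.2.1, q.2.2.1, q.2.2.2, p8, p9, p10)

/-- `S` acting on factors 2,5,8,9 of a 10-tuple. -/
def lift2589 : X × X × X × X × X × X × X × X × X × X → X × X × X × X × X × X × X × X × X × X :=
  fun (p1, p2, p3, p4, p5, p6, p7, p8, p9, p10) =>
    let q := S (p2, p5, p8, p9)
    (p1, q.1, p3, p4, q.2.1, p6, p7, q.2.2.1, q.2.2.2, p10)

/-- `S` acting on factors 3,6,8,10 of a 10-tuple. -/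
def lift368X : X × X × X × X × X × X × X × X × X × X → X × X × X × X × X × X × X × X × X × X :=
  fun (p1, p2, p3, p4, p5, p6, p7, p8, p9, p10) =>
    let q := S (p3, p6, p8, p10)
    (p1, p2, q.1, p4, p5, q.2.1, p7, q.2.2.1, p9, q.2.2.2)

/-- `S` acting on factors 4,7,9,10 of a 10-tuple. -/
def lift479X : X × X × X × X × X × X × X × X × X × X → X × X × X × X × X × X × X × X × X × X :=
  fun (p1, p2, p3, p4, p5, p6, p7, p8, p9, p10) =>
    let q := S (p4, p7, p9, p10)
    (p1, p2, p3, q.1, p5, p6, q.2.1, p8, q.2.2.1, q.2.2.2)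

end Lifts

section Projs
variable {X : Type*}

/-- Projection on factors 1,2,3,4. -/
def proj1234 : X × X × X × X × X × X × X × X × X × X → X × X × X × X :=
  fun (p1, p2, p3, p4, _, _, _, _, _, _) => (p1, p2, p3, p4)

/-- Projection on factors 1,5,6,7. -/
def proj1567 : X × X × X × X × X × X × X × X × X × X → X × X × X × X :=
  fun (p1, _, _, _, p5, p6, p7, _, _, _) => (p1, p5, p6, p7)

/-- Projection on factors 2,5,8,9. -/
def proj2589 : X × X × X × X × X × X × X × X × X × X → X × X × X × X :=
  fun (_, p2, _, _, p5, _, _, p8, p9, _) => (p2, p5, p8, p9)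

/-- Projection on factors 3,6,8,10. -/
def proj368X : X × X × X × X × X × X × X × X × X × X → X × X × X × X :=
  fun (_, _, p3, _, _, p6, _, p8, _, p10) => (p3, p6, p8, p10)

/-- Projection on factors 4,7,9,10. -/
def proj479X : X × X × X × X × X × X × X × X × X × X → X × X × X × X :=
  fun (_, _, _, p4, _, _, p7, _, p9, p10) => (p4, p7, p9, p10)

end Projs

/-- `Ŝ` satisfies the set-theoretical 4-simplex equation,
wherever all denominators are nonzero. -/
theorem hirotaShat_four_simplex (p : (ℂ × ℂ) × (ℂ × ℂ) × (ℂ × ℂ) × (ℂ × ℂ) × (ℂ × ℂ) × (ℂ × ℂ) × (ℂ × ℂ) × (ℂ × ℂ) × (ℂ × ℂ) × (ℂ × ℂ))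
    (h1 : hirotaShatOk (proj479X p))
    (h2 : hirotaShatOk (proj368X (lift479X hirotaShat p)))
    (h3 : hirotaShatOk (proj2589 (lift368X hirotaShat (lift479X hirotaShat p))))
    (h4 : hirotaShatOk (proj1567 (lift2589 hirotaShat (lift368X hirotaShat (lift479X hirotaShat p)))))
    (h5 : hirotaShatOk (proj1234 (lift1567 hirotaShat (lift2589 hirotaShat (lift368X hirotaShat (lift479X hirotaShat p))))))
    (h6 : hirotaShatOk (proj1234 p))
    (h7 : hirotaShatOk (proj1567 (lift1234 hirotaShat p)))
    (h8 : hirotaShatOk (proj2589 (lift1567 hirotaShat (lift1234 hirotaShat p))))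
    (h9 : hirotaShatOk (proj368X (lift2589 hirotaShat (lift1567 hirotaShat (lift1234 hirotaShat p)))))
    (h10 : hirotaShatOk (proj479X (lift368X hirotaShat (lift2589 hirotaShat (lift1567 hirotaShat (lift1234 hirotaShat p)))))) :
    lift1234 hirotaShat (lift1567 hirotaShat (lift2589 hirotaShat (lift368X hirotaShat (lift479X hirotaShat p))))
      = lift479X hirotaShat (lift368X hirotaShat (lift2589 hirotaShat (lift1567 hirotaShat (lift1234 hirotaShat p)))) := by
  obtain ⟨⟨x1,x2⟩,⟨y1,y2⟩,⟨z1,z2⟩,⟨t1,t2⟩,⟨a1,a2⟩,⟨b1,b2⟩,⟨c1,c2⟩,⟨d1,d2⟩,⟨e1,e2⟩,⟨f1,f2⟩⟩ := p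
  simp only [hirotaShat, hirotaShatOk, lift1234, lift1567, lift2589, lift368X, lift479X,
    proj1234, proj1567, proj2589, proj368X, proj479X] at *
  obtain ⟨h1a,h1b,h1c⟩ := h1
  obtain ⟨h2a,h2b,h2c⟩ := h2
  obtain ⟨h3a,h3b,h3c⟩ := h3
  obtain ⟨h4a,h4b,h4c⟩ := h4
  obtain ⟨h5a,h5b,h5c⟩ := h5
  obtain ⟨h6a,h6b,h6c⟩ := h6
  obtain ⟨h7a,h7b,h7c⟩ := h7
  obtain ⟨h8a,h8b,h8c⟩ := h8
  obtain ⟨h9a,h9b,h9c⟩ := h9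
  obtain ⟨h10a,h10b,h10c⟩ := h10
  field_simp at h3a
  replace h3a := (div_ne_zero_iff.mp h3a).1
  field_simp at h4a h4c
  replace h4a := (div_ne_zero_iff.mp h4a).1
  field_simp at h5a h5b
  replace h5a := (div_ne_zero_iff.mp h5a).1
  replace h5a := right_ne_zero_of_mul h5a
  field_simp at h7a
  replace h7a := (div_ne_zero_iff.mp h7a).1
  field_simp at h8a h8b h8c
  field_simp at h9a
  replace h9a := (div_ne_zero_iff.mp h9a).1
  field_simp at h10a h10b h10c
  replace h10a := (div_ne_zero_iff.mp h10a).1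
  have k4 : z2 * x1 * x2 + y2 * (z1 * z2 + b2 * d1) ≠ 0 := fun h => h4a (by linear_combination h)
  have k3 : (z1 * z2 + b2 * d1) * y1 * y2 + a2 * b1 * b2 * d1 ≠ 0 :=
    fun h => h3a (by linear_combination h)
  have k5 : (y1 * y2 * (z1 * z2 + b2 * d1) + a2 * b1 * b2 * d1) * x1 * x2 +
      a2 * b1 * z1 * (z2 * x1 * x2 + y2 * (z1 * z2 + b2 * d1)) ≠ 0 :=
    fun h => h5a (by linear_combination h)
  have k5' : (y1 * y2 * (z1 * z2 + b2 * d1) + a2 * b1 * b2 * d1) * x1 * x2 /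
      (z2 * x1 * x2 + y2 * (z1 * z2 + b2 * d1)) + a2 * b1 * z1 ≠ 0 := by
    rw [div_add' _ _ _ k4]; exact div_ne_zero k5 k4
  have k7 : x1 * x2 * y1 * y2 + a2 * b1 * (x1 * x2 + y2 * z1) ≠ 0 :=
    fun h => h7a (by linear_combination h)
  have k8 : z2 * (x1 * x2 + y2 * z1) + y2 * b2 * d1 ≠ 0 :=
    fun h => h8a (by linear_combination h)
  have k6 : x1 * x2 + z1 * y2 ≠ 0 := fun h => h6a (by linear_combination h)
  have k7' : y1 * y2 * x1 * x2 + a2 * b1 * (x1 * x2 + y2 * z1) ≠ 0 :=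
    fun h => h7a (by linear_combination h)
  have k8' : z2 * (x1 * x2 + z1 * y2) + b2 * d1 * y2 ≠ 0 :=
    fun h => h8a (by linear_combination h)
  have k9 : y1 * y2 * z1 * (z2 * (x1 * x2 + y2 * z1) + y2 * b2 * d1) +
      b2 * d1 * (y1 * y2 * x1 * x2 + a2 * b1 * (x1 * x2 + y2 * z1)) ≠ 0 :=
    fun h => h9a (by linear_combination h)
  have h3a := And.intro h3a k3
  have h4a := And.intro h4a k4
  have h5a := And.intro h5a (And.intro k5 k5')
  have k7'' : y1 * y2 * x1 * x2 + a2 * b1 * (x1 * x2 + z1 * y2) ≠ 0 :=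
    fun h => h7a (by linear_combination h)
  have k9' : z1 * y1 * y2 * (z2 * (x1 * x2 + z1 * y2) + b2 * d1 * y2) +
      b2 * d1 * (y1 * y2 * x1 * x2 + a2 * b1 * (x1 * x2 + z1 * y2)) ≠ 0 :=
    fun h => h9a (by linear_combination h)
  have h7a := And.intro h7a (And.intro k7 (And.intro k7' k7''))
  have h9a := And.intro h9a (And.intro k9 k9')
  have h8a := And.intro h8a (And.intro k8 k8')
  have h6a := And.intro h6a k6
  simp only [Prod.mk.injEq]
  refine ⟨⟨?_,?_⟩,⟨?_,?_⟩,⟨?_,?_⟩,⟨?_,?_⟩,⟨?_,?_⟩,⟨?_,?_⟩,⟨?_,?_⟩,⟨?_,?_⟩,⟨?_,?_⟩,?_,?_⟩ <;>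
    first
    | rfl
    | ring1
    | trivial
    | (field_simp;
       all_goals first
       | ring1
       | (rw [div_eq_iff (by simp [mul_eq_zero, h1a, h2a, h3a, h4a, h5a, h6a, h7a, h8a, h9a,
             h10a, h1b, h1c, h2b, h2c, h3b, h3c, h4b, h4c, h5b, h5c, h6b, h6c, h7b, h7c])];
          try ring1)
       | (rw [eq_div_iff (by simp [mul_eq_zero, h1a, h2a, h3a, h4a, h5a, h6a, h7a, h8a, h9a,
             h10a, h1b, h1c, h2b, h2c, h3b, h3c, h4b, h4c, h5b, h5c, h6b, h6c, h7b, h7c])];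
          try ring1))
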